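/- Let w = w(x₁,…,x_n) be a multilinear commutator word, K a group and M a normal subgroup of K. Suppose w(k₁M,…,k_nM) = 1 for some k₁,…,k_n ∈ K, meaning every value w(k₁u₁,…,k_nu_n) with uᵢ ∈ M is trivial. Then for every proper subset I ⊊ {1,…,n}, one has w_I(kᵢM; M) = 1, i.e., every value w(c₁,…,c_n) with cᵢ ∈ kᵢM for i ∈ I and cᵢ ∈ M for i ∉ I is trivial. -/

import Mathlib

/-- Multilinear commutator words (outer commutator words) on `n` (pairwise
distinct) variables: the single variable is one, and the commutator of two
multilinear commutator words in disjoint variables is one. -/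
inductive MlWord : ℕ → Type
  | var : MlWord 1
  | comm : ∀ {a b : ℕ}, MlWord a → MlWord b → MlWord (a + b)

open scoped commutatorElement

/-- Evaluation of a multilinear commutator word at a tuple of group elements. -/
def MlWord.eval {G : Type*} [Group G] : ∀ {n : ℕ}, MlWord n → (Fin n → G) → G
  | _, .var, g => g 0
  | _, .comm u v, g =>
      ⁅u.eval fun i => g (Fin.castAdd _ i), v.eval fun i => g (Fin.natAdd _ i)⁆

lemma MlWord.eval_hom {G H : Type*} [Group G] [Group H] (φ : G →* H) :
    ∀ {n : ℕ} (w : MlWord n) (x : Fin n → G),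
      φ (w.eval x) = w.eval (fun i => φ (x i))
  | _, .var, x => rfl
  | _, .comm u v, x => by
      simp only [MlWord.eval, map_commutatorElement]
      rw [MlWord.eval_hom φ u, MlWord.eval_hom φ v]

lemma MlWord.eval_conj {G : Type*} [Group G] {n : ℕ} (w : MlWord n) (q : G)
    (x : Fin n → G) :
    w.eval (fun i => q * x i * q⁻¹) = q * w.eval x * q⁻¹ := by
  have := MlWord.eval_hom (MulAut.conj q).toMonoidHom w x
  simpa using this.symm

lemma eval_factored_mem {K : Type*} [Group K] (M : Subgroup K) [M.Normal]
    {n : ℕ} (w : MlWord n) (g y z : Fin n → K) (τ : K)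
    (hy : ∀ i, ∃ m ∈ M, y i = g i * m) (hz : ∀ i, ∃ m ∈ M, z i = g i * m)
    (hτ : τ ∈ M) :
    (w.eval y)⁻¹ * (τ * w.eval z * τ⁻¹) ∈ M := by
  rw [← QuotientGroup.eq_one_iff]
  have hmk : ∀ (y : Fin n → K), (∀ i, ∃ m ∈ M, y i = g i * m) →
      ((w.eval y : K) : K ⧸ M) = w.eval (fun i => ((g i : K) : K ⧸ M)) := by
    intro y hy
    rw [show ((w.eval y : K) : K ⧸ M) = (QuotientGroup.mk' M) (w.eval y) from rfl,
      MlWord.eval_hom]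
    congr 1
    funext i
    obtain ⟨m, hm, hi⟩ := hy i
    simp [hi, (QuotientGroup.eq_one_iff m).mpr hm]
  simp only [QuotientGroup.mk_mul, QuotientGroup.mk_inv, hmk y hy, hmk z hz,
    (QuotientGroup.eq_one_iff τ).mpr hτ]
  group

lemma conj_coset {K : Type*} [Group K] (M : Subgroup K) [hM : M.Normal] {q g x : K}
    (hq : q ∈ M) (h : ∃ m ∈ M, x = g * m) : ∃ m ∈ M, q * x * q⁻¹ = g * m := by
  obtain ⟨m, hm, rfl⟩ := h
  refine ⟨(g⁻¹ * q * g) * m * q⁻¹, ?_, by group⟩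
  exact mul_mem (mul_mem (by simpa using hM.conj_mem q hq g⁻¹) hm) (inv_mem hq)

lemma key_factor {K : Type*} [Group K] (M : Subgroup K) [hM : M.Normal] {n : ℕ}
    (w : MlWord n) :
    ∀ (g x : Fin n → K) (j : Fin n), x j ∈ M →
      (∀ i, i ≠ j → ∃ m ∈ M, x i = g i * m) →
      ∃ (y z : Fin n → K) (τ : K),
        (∀ i, ∃ m ∈ M, y i = g i * m) ∧ (∀ i, ∃ m ∈ M, z i = g i * m) ∧ τ ∈ M ∧
        w.eval x = (w.eval y)⁻¹ * (τ * w.eval z * τ⁻¹) := by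
  induction w with
  | var =>
    intro g x j hj hx
    refine ⟨(fun _ => g j), (fun _ => g j * x j), 1, ?_, ?_, M.one_mem, ?_⟩
    · intro i; exact ⟨1, M.one_mem, by rw [Subsingleton.elim i j, mul_one]⟩
    · intro i; exact ⟨x j, hj, by rw [Subsingleton.elim i j]⟩
    · simp only [MlWord.eval]
      rw [Subsingleton.elim (0 : Fin 1) j]
      group
  | @comm a b u v ihu ihv =>
    intro g x j hj hx
    rcases Nat.lt_or_ge (j : ℕ) a with hja | hja
    · -- the reduced coordinate is in the left part
      set j' : Fin a := ⟨(j : ℕ), hja⟩ with hj'def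
      have hj'v : (j' : ℕ) = (j : ℕ) := rfl
      have hjc : j = Fin.castAdd b j' := by
        apply Fin.ext; rw [Fin.coe_castAdd, hj'v]
      obtain ⟨yL, zL, τ, hyL, hzL, hτ, hW⟩ :=
        ihu (fun i => g (Fin.castAdd b i)) (fun i => x (Fin.castAdd b i)) j'
          (by rw [hjc] at hj; exact hj)
          (by
            intro i hi
            refine hx (Fin.castAdd b i) ?_
            rw [hjc]
            intro h
            exact hi (Fin.ext (by simpa using congrArg Fin.val h)))
      have hxR : ∀ i : Fin b, ∃ m ∈ M, x (Fin.natAdd a i) = g (Fin.natAdd a i) * m := by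
        intro i
        refine hx _ ?_
        rw [hjc]; intro h
        have h2 := congrArg Fin.val h
        simp only [Fin.coe_natAdd, Fin.coe_castAdd] at h2
        omega
      set W : K := u.eval (fun i => x (Fin.castAdd b i)) with hWdef
      set c : K := v.eval (fun i => x (Fin.natAdd a i)) with hcdef
      set A : K := u.eval yL with hA
      set B : K := u.eval zL with hB
      have hWM : W ∈ M := by
        rw [hW]
        exact eval_factored_mem M u _ yL zL τ hyL hzL hτ
      refine ⟨Fin.addCases yL (fun i => W * x (Fin.natAdd a i) * W⁻¹),
              Fin.addCases zL (fun i => τ⁻¹ * x (Fin.natAdd a i) * τ⁻¹⁻¹),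
              τ, ?_, ?_, hτ, ?_⟩
      · intro i
        induction i using Fin.addCases with
        | left i => simp only [Fin.addCases_left]; exact hyL i
        | right i =>
          simp only [Fin.addCases_right]
          exact conj_coset M hWM (hxR i)
      · intro i
        induction i using Fin.addCases with
        | left i => simp only [Fin.addCases_left]; exact hzL i
        | right i =>
          simp only [Fin.addCases_right]
          exact conj_coset M (inv_mem hτ) (hxR i)
      · simp only [MlWord.eval, Fin.addCases_left, Fin.addCases_right]
        rw [MlWord.eval_conj v W, MlWord.eval_conj v τ⁻¹]
        rw [← hWdef, ← hcdef, ← hA, ← hB, hW]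
        simp only [commutatorElement_def]
        group
    · -- the reduced coordinate is in the right part
      have hjb : (j : ℕ) - a < b := by have := j.isLt; omega
      set j' : Fin b := ⟨(j : ℕ) - a, hjb⟩ with hj'def
      have hj'v : (j' : ℕ) = (j : ℕ) - a := rfl
      have hjc : j = Fin.natAdd a j' := by
        apply Fin.ext; rw [Fin.coe_natAdd, hj'v]; omega
      obtain ⟨yR, zR, τ, hyR, hzR, hτ, hW⟩ :=
        ihv (fun i => g (Fin.natAdd a i)) (fun i => x (Fin.natAdd a i)) j'
          (by rw [hjc] at hj; exact hj)
          (by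
            intro i hi
            refine hx (Fin.natAdd a i) ?_
            rw [hjc]
            intro h
            have h2 := congrArg Fin.val h
            simp only [Fin.coe_natAdd] at h2
            exact hi (Fin.ext (by omega)))
      have hxL : ∀ i : Fin a, ∃ m ∈ M, x (Fin.castAdd b i) = g (Fin.castAdd b i) * m := by
        intro i
        refine hx _ ?_
        rw [hjc]; intro h
        have h2 := congrArg Fin.val h
        simp only [Fin.coe_natAdd, Fin.coe_castAdd] at h2
        have := i.isLt
        omega
      set W : K := v.eval (fun i => x (Fin.natAdd a i)) with hWdef
      set c : K := u.eval (fun i => x (Fin.castAdd b i)) with hcdef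
      set A : K := v.eval yR with hA
      set B : K := v.eval zR with hB
      have hWM : W ∈ M := by
        rw [hW]
        exact eval_factored_mem M v _ yR zR τ hyR hzR hτ
      set T2 : K := ⁅c, W⁆ with hT2def
      have hT2 : T2 ∈ M := by
        have h1 : T2 = (c * W * c⁻¹) * W⁻¹ := by
          rw [hT2def]; exact commutatorElement_def c W
        rw [h1]
        exact mul_mem (hM.conj_mem W hWM c) (inv_mem hWM)
      refine ⟨fun i => T2 * (Fin.addCases (fun i' => W * x (Fin.castAdd b i') * W⁻¹) yR i) * T2⁻¹,
              Fin.addCases (fun i' => τ⁻¹ * x (Fin.castAdd b i') * τ⁻¹⁻¹) zR,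
              τ, ?_, ?_, hτ, ?_⟩
      · intro i
        refine conj_coset M hT2 ?_
        induction i using Fin.addCases with
        | left i =>
          simp only [Fin.addCases_left]
          exact conj_coset M hWM (hxL i)
        | right i => simp only [Fin.addCases_right]; exact hyR i
      · intro i
        induction i using Fin.addCases with
        | left i =>
          simp only [Fin.addCases_left]
          exact conj_coset M (inv_mem hτ) (hxL i)
        | right i => simp only [Fin.addCases_right]; exact hzR i
      · simp only [MlWord.eval, Fin.addCases_left, Fin.addCases_right]
        rw [MlWord.eval_conj u T2, MlWord.eval_conj v T2, MlWord.eval_conj u W,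
          MlWord.eval_conj u τ⁻¹]
        rw [← hWdef, ← hcdef, ← hA, ← hB, hT2def, hW]
        simp only [commutatorElement_def]
        group

/-- Corollary (uno2): if all values `w(k₁u₁, …, kₙuₙ)` with `uᵢ ∈ M ⊴ K` are
trivial, then for every proper subset `I ⊊ {1,…,n}` all values with arguments
in `kᵢM` at positions in `I` and in `M` elsewhere are trivial. -/
theorem stmt_7 {K : Type*} [Group K] {n : ℕ} (w : MlWord n) (M : Subgroup K)
    [M.Normal] (k : Fin n → K)
    (hw : ∀ u : Fin n → K, (∀ i, ∃ v ∈ M, k i * v = u i) → w.eval u = 1)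
    (I : Finset (Fin n)) (hI : I ≠ Finset.univ) :
    ∀ c : Fin n → K, (∀ i ∈ I, ∃ v ∈ M, k i * v = c i) → (∀ i ∉ I, c i ∈ M) →
      w.eval c = 1 := by
  have main : ∀ D : Finset (Fin n), ∀ x : Fin n → K,
      (∀ i ∉ D, ∃ v ∈ M, k i * v = x i) → (∀ i ∈ D, x i ∈ M) → w.eval x = 1 := by
    intro D
    induction D using Finset.induction_on with
    | empty =>
      intro x h1 _
      exact hw x (fun i => h1 i (by simp))
    | @insert j D hjD ih =>
      intro x h1 h2
      obtain ⟨y, z, τ, hy, hz, hτ, heq⟩ :=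
        key_factor M w (fun i => if i ∈ D then 1 else k i) x j
          (h2 j (Finset.mem_insert_self j D))
          (by
            intro i hij
            by_cases hiD : i ∈ D
            · exact ⟨x i, h2 i (Finset.mem_insert_of_mem hiD), by simp [hiD]⟩
            · obtain ⟨v, hv, hkv⟩ := h1 i (by simp [hij, hiD])
              exact ⟨v, hv, by simp [hiD, ← hkv]⟩)
      have hy1 : w.eval y = 1 := by
        refine ih y ?_ ?_
        · intro i hiD
          obtain ⟨m, hm, hyi⟩ := hy i
          exact ⟨m, hm, by simp [hyi, hiD]⟩
        · intro i hiD
          obtain ⟨m, hm, hyi⟩ := hy i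
          simpa [hyi, hiD] using hm
      have hz1 : w.eval z = 1 := by
        refine ih z ?_ ?_
        · intro i hiD
          obtain ⟨m, hm, hzi⟩ := hz i
          exact ⟨m, hm, by simp [hzi, hiD]⟩
        · intro i hiD
          obtain ⟨m, hm, hzi⟩ := hz i
          simpa [hzi, hiD] using hm
      rw [heq, hy1, hz1]
      group
  intro c hc hcM
  exact main Iᶜ c (fun i hi => hc i (by simpa using hi))
    (fun i hi => hcM i (by simpa using hi))
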